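/- Let f̄ and f be even probability densities on ℝ such that f̄ dominates f, i.e., ∫_δ^∞ f̄(s)ds ≥ ∫_δ^∞ f(s)ds for all δ ≥ 0, and let g be a nice function (an even probability density on ℝ, continuous and nonincreasing on [0,∞)). Then the convolution f̄⋆g dominates f⋆g: ∫_δ^∞ (f̄⋆g)(s)ds ≥ ∫_δ^∞ (f⋆g)(s)ds for all δ ≥ 0. -/

import Mathlib

open MeasureTheory Set

noncomputable section

/-- `γ` is a probability density on `ℝ`. -/
def IsDensity1 (γ : ℝ → ℝ) : Prop := (∀ s, 0 ≤ γ s) ∧ (∫ s, γ s) = 1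

/-- A nice function: an even probability density on `ℝ`, continuous and nonincreasing on
`[0,∞)`. -/
def Nice (f : ℝ → ℝ) : Prop :=
  IsDensity1 f ∧ (∀ s, f (-s) = f s) ∧ Continuous f ∧ AntitoneOn f (Set.Ici 0)

/-- Convolution of two functions on `ℝ`. -/
def convol (f g : ℝ → ℝ) : ℝ → ℝ := fun s => ∫ r, f (s - r) * g r

namespace S19

lemma integrable_of_density {f : ℝ → ℝ} (h : IsDensity1 f) : Integrable f := by
  by_contra hc
  have h2 := h.2
  rw [integral_undef hc] at h2
  norm_num at h2

/-- tail function -/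
def tail (f : ℝ → ℝ) (δ : ℝ) : ℝ := ∫ s in Ici δ, f s

lemma tail_antitone {f : ℝ → ℝ} (hi : Integrable f) (h0 : ∀ s, 0 ≤ f s) :
    Antitone (tail f) := fun a b hab =>
  setIntegral_mono_set hi.integrableOn (Filter.Eventually.of_forall h0)
    (HasSubset.Subset.eventuallyLE (Ici_subset_Ici.mpr hab))

lemma tail_measurable {f : ℝ → ℝ} (hi : Integrable f) (h0 : ∀ s, 0 ≤ f s) :
    Measurable (tail f) := (tail_antitone hi h0).measurable

lemma tail_nonneg {f : ℝ → ℝ} (h0 : ∀ s, 0 ≤ f s) (δ : ℝ) : 0 ≤ tail f δ :=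
  setIntegral_nonneg measurableSet_Ici fun s _ => h0 s

lemma tail_le_one {f : ℝ → ℝ} (h : IsDensity1 f) (δ : ℝ) : tail f δ ≤ 1 := by
  have := setIntegral_le_integral (s := Ici δ) (integrable_of_density h)
    (Filter.Eventually.of_forall h.1)
  rwa [h.2] at this

lemma tail_neg {f : ℝ → ℝ} (h : IsDensity1 f) (he : ∀ s, f (-s) = f s) (t : ℝ) :
    tail f (-t) = 1 - tail f t := by
  have hi := integrable_of_density h
  have h1 : (∫ x in Iic (-t), f x) = ∫ x in Ici t, f x := by
    rw [← integral_comp_neg_Ioi t f]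
    simp_rw [he]
    rw [integral_Ici_eq_integral_Ioi]
  have h2 : (∫ x in Iic (-t), f x) + ∫ x in Ioi (-t), f x = 1 := by
    rw [intervalIntegral.integral_Iic_add_Ioi hi.integrableOn hi.integrableOn, h.2]
  unfold tail
  rw [integral_Ici_eq_integral_Ioi (x := -t), integral_Ici_eq_integral_Ioi (x := t)]
  rw [integral_Ici_eq_integral_Ioi] at h1
  linarith [h1, h2]

lemma shift (f : ℝ → ℝ) (r δ : ℝ) :
    (∫ s in Ici δ, f (s - r)) = tail f (δ - r) := by
  have h1 : MeasurePreserving (fun s : ℝ => s - r) volume volume :=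
    measurePreserving_sub_right volume r
  have h2 : MeasurableEmbedding (fun s : ℝ => s - r) :=
    (MeasurableEquiv.subRight r).measurableEmbedding
  have h3 := h1.setIntegral_preimage_emb h2 f (Ici (δ - r))
  rw [show (fun s : ℝ => s - r) ⁻¹' Ici (δ - r) = Ici δ by
    ext s; simp [sub_le_sub_iff_right]] at h3
  exact h3

lemma tail_conv {f g : ℝ → ℝ} (hf : IsDensity1 f) (hgi : Integrable g) (δ : ℝ) :
    (∫ s in Ici δ, convol f g s) = ∫ r, tail f (δ - r) * g r := by
  have hfi := integrable_of_density hf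
  have hint : Integrable (fun p : ℝ × ℝ => g p.2 * f (p.1 - p.2))
      ((volume : Measure ℝ).prod volume) := by
    have := hgi.convolution_integrand (ContinuousLinearMap.mul ℝ ℝ) hfi
    simpa using this
  have hres : Integrable (fun p : ℝ × ℝ => g p.2 * f (p.1 - p.2))
      ((volume.restrict (Ici δ)).prod volume) := by
    rw [show (volume.restrict (Ici δ)).prod (volume : Measure ℝ)
        = ((volume : Measure ℝ).prod volume).restrict (Ici δ ×ˢ univ) by
      rw [← Measure.prod_restrict, Measure.restrict_univ]]
    exact hint.restrict
  have hconv : ∀ s, convol f g s = ∫ r, g r * f (s - r) := by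
    intro s; unfold convol; congr 1; funext r; ring
  calc (∫ s in Ici δ, convol f g s)
      = ∫ s in Ici δ, ∫ r, g r * f (s - r) := by simp_rw [hconv]
    _ = ∫ r, ∫ s in Ici δ, g r * f (s - r) :=
        integral_integral_swap (f := fun s r => g r * f (s - r)) hres
    _ = ∫ r, g r * ∫ s in Ici δ, f (s - r) := by
        congr 1; funext r; exact integral_const_mul _ _
    _ = ∫ r, tail f (δ - r) * g r := by
        congr 1; funext r; rw [shift f r δ]; ring

lemma even_abs {g : ℝ → ℝ} (hge : ∀ s, g (-s) = g s) (x : ℝ) : g x = g |x| := by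
  rcases abs_cases x with ⟨h1, _⟩ | ⟨h1, _⟩
  · rw [h1]
  · rw [h1, hge]

end S19

open S19

/-- if the even densities `f̄, f` satisfy `f̄ ⪰ f` (tail domination on
`[0,∞)`) and `g` is nice, then `f̄⋆g ⪰ f⋆g`. -/
theorem statement19 (fbar f g : ℝ → ℝ)
    (hfbar : IsDensity1 fbar) (hf : IsDensity1 f)
    (hfbare : ∀ s, fbar (-s) = fbar s) (hfe : ∀ s, f (-s) = f s)
    (hdom : ∀ δ : ℝ, 0 ≤ δ → (∫ s in Set.Ici δ, f s) ≤ ∫ s in Set.Ici δ, fbar s)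
    (hg : Nice g) :
    ∀ δ : ℝ, 0 ≤ δ →
      (∫ s in Set.Ici δ, convol f g s) ≤ ∫ s in Set.Ici δ, convol fbar g s := by
  obtain ⟨hgd, hge, hgc, hgm⟩ := hg
  have hgi := integrable_of_density hgd
  have hfi := integrable_of_density hf
  have hfbari := integrable_of_density hfbar
  intro δ hδ
  rw [tail_conv hf hgi δ, tail_conv hfbar hgi δ]
  -- the odd difference of tails
  set h : ℝ → ℝ := fun t => tail fbar t - tail f t with hh
  have hm : Measurable h :=
    (tail_measurable hfbari hfbar.1).sub (tail_measurable hfi hf.1)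
  have hbd : ∀ t, ‖h t‖ ≤ 1 := by
    intro t
    rw [Real.norm_eq_abs, abs_le]
    constructor <;> simp only [hh] <;>
      [linarith [tail_nonneg hfbar.1 t, tail_le_one hf t];
       linarith [tail_nonneg hf.1 t, tail_le_one hfbar t]]
  have hodd : ∀ t, h (-t) = -h t := by
    intro t
    simp only [hh, tail_neg hfbar hfbare t, tail_neg hf hfe t]
    ring
  have hnn : ∀ t, 0 ≤ t → 0 ≤ h t := fun t ht => sub_nonneg.mpr (hdom t ht)
  -- integrability of the two sides
  have hintf : Integrable (fun r => tail f (δ - r) * g r) :=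
    hgi.bdd_mul ((tail_measurable hfi hf.1).comp
      (measurable_const.sub measurable_id)).aestronglyMeasurable
      (Filter.Eventually.of_forall fun r => by
        rw [Real.norm_eq_abs, abs_of_nonneg (tail_nonneg hf.1 _)]
        exact tail_le_one hf _)
  have hintfbar : Integrable (fun r => tail fbar (δ - r) * g r) :=
    hgi.bdd_mul ((tail_measurable hfbari hfbar.1).comp
      (measurable_const.sub measurable_id)).aestronglyMeasurable
      (Filter.Eventually.of_forall fun r => by
        rw [Real.norm_eq_abs, abs_of_nonneg (tail_nonneg hfbar.1 _)]
        exact tail_le_one hfbar _)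
  rw [← sub_nonneg, ← integral_sub hintfbar hintf]
  have hsub : (fun r => tail fbar (δ - r) * g r - tail f (δ - r) * g r)
      = fun r => h (δ - r) * g r := by
    funext r; simp only [hh]; ring
  rw [hsub]
  -- substitute u = δ - r
  have hmp : MeasurePreserving (fun u : ℝ => δ - u) volume volume := by
    simpa [Function.comp_def, sub_eq_add_neg] using
      (measurePreserving_add_left (volume : Measure ℝ) δ).comp
        (Measure.measurePreserving_neg (volume : Measure ℝ))
  have hemb : MeasurableEmbedding (fun u : ℝ => δ - u) :=
    (MeasurableEquiv.subLeft δ).measurableEmbedding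
  have hsubst : (∫ r, h (δ - r) * g r) = ∫ u, h u * g (δ - u) := by
    have := hmp.integral_comp hemb (fun u => h u * g (δ - u))
    simp only [sub_sub_cancel] at this
    exact this
  rw [hsubst]
  -- integrability of u ↦ h u * g (δ - u) and u ↦ h u * g (δ + u)
  have hgint1 : Integrable (fun u : ℝ => g (δ - u)) := hgi.comp_sub_left δ
  have hgint2 : Integrable (fun u : ℝ => g (δ + u)) := by
    have := hgi.comp_add_left δ
    simpa using this
  have hint1 : Integrable (fun u => h u * g (δ - u)) :=
    hgint1.bdd_mul hm.aestronglyMeasurable (Filter.Eventually.of_forall hbd)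
  have hint2 : Integrable (fun u => h u * g (δ + u)) :=
    hgint2.bdd_mul hm.aestronglyMeasurable (Filter.Eventually.of_forall hbd)
  -- split the integral at 0
  rw [← intervalIntegral.integral_Iic_add_Ioi (b := (0:ℝ)) hint1.integrableOn hint1.integrableOn]
  have hleft : (∫ u in Iic (0:ℝ), h u * g (δ - u))
      = ∫ u in Ioi (0:ℝ), -(h u * g (δ + u)) := by
    have key := integral_comp_neg_Iic (0:ℝ) (fun u => h (-u) * g (δ + u))
    simp only [neg_neg, neg_zero, ← sub_eq_add_neg, hodd, neg_mul] at key
    exact key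
  rw [hleft, integral_neg]
  have hsplit := integral_sub hint1.integrableOn (hint2.integrableOn (s := Ioi (0:ℝ)))
  have hpos : 0 ≤ ∫ u in Ioi (0:ℝ), (h u * g (δ - u) - h u * g (δ + u)) := by
    apply setIntegral_nonneg measurableSet_Ioi
    intro u hu
    have hu' : 0 ≤ u := le_of_lt hu
    have habs : |δ - u| ≤ δ + u := by rw [abs_le]; constructor <;> linarith
    have h1 : g (δ + u) ≤ g (δ - u) := by
      rw [even_abs hge (δ - u)]
      exact hgm (Set.mem_Ici.mpr (abs_nonneg _)) (Set.mem_Ici.mpr (by linarith)) habs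
    exact sub_nonneg.mpr (mul_le_mul_of_nonneg_left h1 (hnn u hu'))
  rw [hsplit] at hpos
  linarith
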